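/- arXiv:1709.06349 — 2 statements merged into one kernel-verified Lean document; each statement's English description precedes it below -/
import Mathlib

section
/- Let G' be a bi-coloured multigraph containing distinct vertices x, y, z with edges (xy,b), (xy,r), (yz,b), (yz,r) and with (xz,r) not an edge of G', and let G be obtained from G' by a K₂⊔K₂ substitution on x, y, z. Then G is (2,2)-tight and (2,3)-limited if and only if G' is (2,2)-tight and (2,3)-limited. -/
open scoped BigOperators

noncomputable section

/-- The two edge colours: `b` (blue) and `r` (red). -/
inductive Col : Type
  | b : Col
  | r : Col
  deriving DecidableEq

/-- A bi-coloured multigraph on a finite vertex set: each colour class is a set of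
unordered pairs of distinct vertices (so each monochrome subgraph is a simple graph). -/
structure BiGraph (α : Type) [DecidableEq α] : Type where
  verts : Finset α
  edges : Col → Finset (Sym2 α)
  valid : ∀ c, ∀ e ∈ edges c, ¬ e.IsDiag ∧ ∀ x ∈ e, x ∈ verts

namespace BiGraph

variable {α : Type} [DecidableEq α]

/-- The number of edges (blue and red edges counted separately). -/
def edgeCount (G : BiGraph α) : ℕ :=
  (G.edges Col.b).card + (G.edges Col.r).card

def IsSubgraph (H G : BiGraph α) : Prop :=
  H.verts ⊆ G.verts ∧ ∀ c, H.edges c ⊆ G.edges c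

def ProperSubgraph (H G : BiGraph α) : Prop :=
  H.IsSubgraph G ∧ (H.verts ≠ G.verts ∨ ∃ c, H.edges c ≠ G.edges c)

/-- `(2,k)`-sparsity: every subgraph with at least one edge satisfies `|E| ≤ 2|V| - k`. -/
def Sparse (G : BiGraph α) (k : ℤ) : Prop :=
  ∀ H : BiGraph α, H.IsSubgraph G → 0 < H.edgeCount →
    (H.edgeCount : ℤ) ≤ 2 * (H.verts.card : ℤ) - k

/-- `(2,k)`-tightness. -/
def Tight (G : BiGraph α) (k : ℤ) : Prop :=
  G.Sparse k ∧ (G.edgeCount : ℤ) = 2 * (G.verts.card : ℤ) - k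

/-- `f(G) = 2|V| - |E|`. -/
def fcount (G : BiGraph α) : ℤ :=
  2 * (G.verts.card : ℤ) - (G.edgeCount : ℤ)

/-- `(2,3)`-limited: every purely blue subgraph is `(2,3)`-sparse. -/
def Limited23 (G : BiGraph α) : Prop :=
  ∀ H : BiGraph α, H.IsSubgraph G → H.edges Col.r = ∅ → 0 < H.edgeCount →
    (H.edgeCount : ℤ) ≤ 2 * (H.verts.card : ℤ) - 3

/-- A `(2,3)`-circuit. -/
def IsCircuit23 (G : BiGraph α) : Prop :=
  (G.edgeCount : ℤ) = 2 * (G.verts.card : ℤ) - 2 ∧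
  ∀ H : BiGraph α, H.ProperSubgraph G → 0 < H.edgeCount →
    (H.edgeCount : ℤ) ≤ 2 * (H.verts.card : ℤ) - 3

/-- Delete the edge `e₀` of colour `c`. -/
def deleteEdge (G : BiGraph α) (c : Col) (e₀ : Sym2 α) : BiGraph α where
  verts := G.verts
  edges := fun d => if d = c then (G.edges d).erase e₀ else G.edges d
  valid := by
    intro d e he
    try simp only at he
    by_cases h : d = c
    · rw [if_pos h] at he
      exact G.valid d e (Finset.mem_of_mem_erase he)
    · rw [if_neg h] at he
      exact G.valid d e he

/-- The complete bi-coloured multigraph on a vertex set: one blue and one red edge on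
each pair of distinct vertices. -/
def complete (Vs : Finset α) : BiGraph α where
  verts := Vs
  edges := fun _ => Vs.sym2.filter (fun e => ¬ e.IsDiag)
  valid := by
    intro c e he
    rw [Finset.mem_filter] at he
    exact ⟨he.2, fun x hx => Finset.mem_sym2_iff.mp he.1 x hx⟩

/-- The degree of a vertex (edges of both colours counted). -/
def degree (G : BiGraph α) (v : α) : ℕ :=
  ((G.edges Col.b).filter (fun e => v ∈ e)).card +
    ((G.edges Col.r).filter (fun e => v ∈ e)).card

/-- `G` is a single vertex with no edges. -/
def IsK1 (G : BiGraph α) : Prop :=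
  (∃ v, G.verts = {v}) ∧ ∀ c, G.edges c = ∅

/-- `G` is a bi-coloured `K₄` (each pair of the four vertices joined by exactly one
edge) with at least 5 edges of the same colour. -/
def IsK4Base (G : BiGraph α) : Prop :=
  G.verts.card = 4 ∧
  G.edges Col.b ∪ G.edges Col.r = G.verts.sym2.filter (fun e => ¬ e.IsDiag) ∧
  Disjoint (G.edges Col.b) (G.edges Col.r) ∧
  (5 ≤ (G.edges Col.b).card ∨ 5 ≤ (G.edges Col.r).card)

/-- 0-extension: add a new vertex `v` of degree 2, either joined to two distinct
existing vertices by edges of arbitrary colours, or joined to a single existing vertex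
by one blue and one red edge. -/
def ZeroExt (G G' : BiGraph α) : Prop :=
  ∃ v, v ∉ G.verts ∧ G'.verts = insert v G.verts ∧
    ((∃ x y c₁ c₂, x ∈ G.verts ∧ y ∈ G.verts ∧ x ≠ y ∧
        ∀ d, G'.edges d = G.edges d ∪
          ((if d = c₁ then {s(x, v)} else ∅) ∪ (if d = c₂ then {s(y, v)} else ∅))) ∨
     (∃ x, x ∈ G.verts ∧ ∀ d, G'.edges d = insert s(x, v) (G.edges d)))

/-- 1-extension with explicit data: delete the edge `s(x,y)` of colour `c`, add a new
vertex `v` with replacement edges `(xv, c₂)`, `(yv, c₃)` and a third edge `(zv, c₄)`;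
`z` may equal `x` or `y` provided the resulting parallel edges at `v` have distinct
colours. The colour case is `c → {c₂, c₃}`. -/
def OneExtOn (G G' : BiGraph α) (c c₂ c₃ : Col) (x y z v : α) : Prop :=
  x ≠ y ∧ x ∈ G.verts ∧ y ∈ G.verts ∧ z ∈ G.verts ∧ v ∉ G.verts ∧
  s(x, y) ∈ G.edges c ∧
  ∃ c₄ : Col, (z = x → c₄ ≠ c₂) ∧ (z = y → c₄ ≠ c₃) ∧
    G'.verts = insert v G.verts ∧
    ∀ d, G'.edges d =
      ((if d = c then (G.edges d).erase s(x, y) else G.edges d)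
        ∪ (if d = c₂ then {s(x, v)} else ∅))
        ∪ ((if d = c₃ then {s(y, v)} else ∅)
        ∪ (if d = c₄ then {s(z, v)} else ∅))

def OneExt (G G' : BiGraph α) (c c₂ c₃ : Col) : Prop :=
  ∃ x y z v, OneExtOn G G' c c₂ c₃ x y z v

/-- Colour-restricted 1-extension: the deleted edge and both replacement edges have the
same colour, and the new vertex has three distinct neighbours. -/
def ColRes1Ext (G G' : BiGraph α) : Prop :=
  ∃ c x y z v, z ≠ x ∧ z ≠ y ∧ OneExtOn G G' c c c x y z v

/-- Colour-restricted vertex split on an edge of colour `c`: the vertex `v` is split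
into `v` and `w`, the chosen neighbour `x` (with `(xv,c) ∈ E`) becomes joined to both,
the edge `(vw, c)` is added, and every other edge at `v` goes to `v` or to `w`. -/
def ColResVSplitC (G G' : BiGraph α) (c : Col) : Prop :=
  ∃ (v w x : α) (T : Col → Finset (Sym2 α)),
    v ∈ G.verts ∧ w ∉ G.verts ∧ s(x, v) ∈ G.edges c ∧
    (∀ d, T d ⊆ (G.edges d).filter (fun e => v ∈ e)) ∧ s(x, v) ∉ T c ∧
    G'.verts = insert w G.verts ∧
    ∀ d, G'.edges d =
      ((G.edges d \ T d) ∪ (T d).image (Sym2.map (fun u => if u = v then w else u)))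
        ∪ (if d = c then {s(x, w), s(v, w)} else ∅)

def ColResVSplit (G G' : BiGraph α) : Prop :=
  ∃ c, ColResVSplitC G G' c

/-- Graph extension: `G` is obtained from `G₀` by deleting the vertex `v`, adding a
disjoint copy of `H` (with `f(H) = 2`), and replacing each edge `(xv, c)` of `G₀` by an
edge `(x, m c x)` of colour `c` with `m c x` a vertex of `H`. -/
def GraphExt (G₀ G H : BiGraph α) (v : α) : Prop :=
  v ∈ G₀.verts ∧ Disjoint H.verts G₀.verts ∧ H.fcount = 2 ∧
  G.verts = (G₀.verts.erase v) ∪ H.verts ∧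
  ∃ m : Col → α → α, (∀ d x, m d x ∈ H.verts) ∧
    ∀ d, G.edges d =
      (((G₀.edges d).filter (fun e => v ∉ e)) ∪ H.edges d) ∪
        (((G₀.verts.erase v).filter (fun x => s(x, v) ∈ G₀.edges d)).image
          (fun x => s(x, m d x)))

/-- `K₂ ⊔ K₂` substitution: in `G'` the vertices `x, y, z` carry the four edges
`(xy,b), (xy,r), (yz,b), (yz,r)` and `(xz,r)` is not an edge; `G` is obtained by
deleting the two blue edges, adding a new vertex `v` and the red edges
`(xz,r), (xv,r), (yv,r), (zv,r)`, so that `x, y, z, v` span a red `K₄`. -/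
def K2SubstOn (G' G : BiGraph α) (x y z v : α) : Prop :=
  x ≠ y ∧ y ≠ z ∧ x ≠ z ∧
  x ∈ G'.verts ∧ y ∈ G'.verts ∧ z ∈ G'.verts ∧ v ∉ G'.verts ∧
  s(x, y) ∈ G'.edges Col.b ∧ s(x, y) ∈ G'.edges Col.r ∧
  s(y, z) ∈ G'.edges Col.b ∧ s(y, z) ∈ G'.edges Col.r ∧
  s(x, z) ∉ G'.edges Col.r ∧
  G.verts = insert v G'.verts ∧
  G.edges Col.b = ((G'.edges Col.b).erase s(x, y)).erase s(y, z) ∧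
  G.edges Col.r =
    insert s(x, z) (insert s(x, v) (insert s(y, v) (insert s(z, v) (G'.edges Col.r))))

end BiGraph

namespace K2K2Aux

open BiGraph

variable {α : Type} [DecidableEq α]

/-- Build a bi-coloured graph from a vertex set and two edge sets. -/
def mk2 (V : Finset α) (Eb Er : Finset (Sym2 α))
    (hb : ∀ e ∈ Eb, ¬ e.IsDiag ∧ ∀ t ∈ e, t ∈ V)
    (hr : ∀ e ∈ Er, ¬ e.IsDiag ∧ ∀ t ∈ e, t ∈ V) : BiGraph α where
  verts := V
  edges := fun c => match c with | Col.b => Eb | Col.r => Er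
  valid := by
    intro c
    cases c
    · exact hb
    · exact hr

@[simp] theorem mk2_verts (V : Finset α) (Eb Er : Finset (Sym2 α)) (hb hr) :
    (mk2 V Eb Er hb hr).verts = V := rfl

@[simp] theorem mk2_edges_b (V : Finset α) (Eb Er : Finset (Sym2 α)) (hb hr) :
    (mk2 V Eb Er hb hr).edges Col.b = Eb := rfl

@[simp] theorem mk2_edges_r (V : Finset α) (Eb Er : Finset (Sym2 α)) (hb hr) :
    (mk2 V Eb Er hb hr).edges Col.r = Er := rfl

@[simp] theorem mk2_edgeCount (V : Finset α) (Eb Er : Finset (Sym2 α)) (hb hr) :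
    (mk2 V Eb Er hb hr).edgeCount = Eb.card + Er.card := rfl

theorem insert_ind {β : Type*} [DecidableEq β] (s : Finset β) (a : β) :
    ∃ i : ℤ, ((insert a s).card : ℤ) = s.card + i ∧ 0 ≤ i ∧ i ≤ 1 ∧ (a ∈ s ↔ i = 0) := by
  by_cases h : a ∈ s
  · refine ⟨0, ?_, by norm_num, by norm_num, by simp [h]⟩
    rw [Finset.insert_eq_self.mpr h]; ring
  · refine ⟨1, ?_, by norm_num, le_refl _, by simp [h]⟩
    rw [Finset.card_insert_of_notMem h]; push_cast; ring

theorem erase_ind {β : Type*} [DecidableEq β] (s : Finset β) (a : β) :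
    ∃ i : ℤ, ((s.erase a).card : ℤ) = s.card - i ∧ 0 ≤ i ∧ i ≤ 1 ∧ (a ∈ s ↔ i = 1) := by
  by_cases h : a ∈ s
  · refine ⟨1, ?_, by norm_num, le_refl _, by simp [h]⟩
    have := Finset.card_erase_add_one h
    push_cast [← this]; ring
  · refine ⟨0, ?_, by norm_num, by norm_num, by simp [h]⟩
    rw [Finset.erase_eq_of_notMem h]; ring

end K2K2Aux

set_option maxHeartbeats 1600000 in
/-- If `G` is obtained from `G'` by a `K₂ ⊔ K₂` substitution on
`x, y, z`, then `G` is `(2,2)`-tight and `(2,3)`-limited if and only if `G'` is. -/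
theorem K2K2_substitution_preserves_tight_limited
    {α : Type} [DecidableEq α] (G' G : BiGraph α) (x y z v : α)
    (hsub : BiGraph.K2SubstOn G' G x y z v) :
    (G.Tight 2 ∧ G.Limited23) ↔ (G'.Tight 2 ∧ G'.Limited23) := by

  classical
  obtain ⟨hxy, hyz, hxz, hxm, hym, hzm, hvm, hxyb, hxyr, hyzb, hyzr, hxzr, hV, hEb, hEr⟩ := hsub
  have hxv : x ≠ v := fun h => hvm (h ▸ hxm)
  have hyv : y ≠ v := fun h => hvm (h ▸ hym)
  have hzv : z ≠ v := fun h => hvm (h ▸ hzm)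
  have hyx := hxy.symm
  have hzy := hyz.symm
  have hzx := hxz.symm
  have hvx := hxv.symm
  have hvy := hyv.symm
  have hvz := hzv.symm
  have n1 : s(x,y) ≠ s(y,z) := by simp [Sym2.eq_iff, hxy, hyz, hxz, hyx, hzy, hzx, hxv, hyv, hzv, hvx, hvy, hvz]
  have n2 : s(x,y) ≠ s(x,z) := by simp [Sym2.eq_iff, hxy, hyz, hxz, hyx, hzy, hzx, hxv, hyv, hzv, hvx, hvy, hvz]
  have n3 : s(x,y) ≠ s(x,v) := by simp [Sym2.eq_iff, hxy, hyz, hxz, hyx, hzy, hzx, hxv, hyv, hzv, hvx, hvy, hvz]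
  have n4 : s(x,y) ≠ s(y,v) := by simp [Sym2.eq_iff, hxy, hyz, hxz, hyx, hzy, hzx, hxv, hyv, hzv, hvx, hvy, hvz]
  have n5 : s(x,y) ≠ s(z,v) := by simp [Sym2.eq_iff, hxy, hyz, hxz, hyx, hzy, hzx, hxv, hyv, hzv, hvx, hvy, hvz]
  have n6 : s(y,z) ≠ s(x,z) := by simp [Sym2.eq_iff, hxy, hyz, hxz, hyx, hzy, hzx, hxv, hyv, hzv, hvx, hvy, hvz]
  have n7 : s(y,z) ≠ s(x,v) := by simp [Sym2.eq_iff, hxy, hyz, hxz, hyx, hzy, hzx, hxv, hyv, hzv, hvx, hvy, hvz]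
  have n8 : s(y,z) ≠ s(y,v) := by simp [Sym2.eq_iff, hxy, hyz, hxz, hyx, hzy, hzx, hxv, hyv, hzv, hvx, hvy, hvz]
  have n9 : s(y,z) ≠ s(z,v) := by simp [Sym2.eq_iff, hxy, hyz, hxz, hyx, hzy, hzx, hxv, hyv, hzv, hvx, hvy, hvz]
  have n10 : s(x,z) ≠ s(x,v) := by simp [Sym2.eq_iff, hxy, hyz, hxz, hyx, hzy, hzx, hxv, hyv, hzv, hvx, hvy, hvz]
  have n11 : s(x,z) ≠ s(y,v) := by simp [Sym2.eq_iff, hxy, hyz, hxz, hyx, hzy, hzx, hxv, hyv, hzv, hvx, hvy, hvz]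
  have n12 : s(x,z) ≠ s(z,v) := by simp [Sym2.eq_iff, hxy, hyz, hxz, hyx, hzy, hzx, hxv, hyv, hzv, hvx, hvy, hvz]
  have n13 : s(x,v) ≠ s(y,v) := by simp [Sym2.eq_iff, hxy, hyz, hxz, hyx, hzy, hzx, hxv, hyv, hzv, hvx, hvy, hvz]
  have n14 : s(x,v) ≠ s(z,v) := by simp [Sym2.eq_iff, hxy, hyz, hxz, hyx, hzy, hzx, hxv, hyv, hzv, hvx, hvy, hvz]
  have n15 : s(y,v) ≠ s(z,v) := by simp [Sym2.eq_iff, hxy, hyz, hxz, hyx, hzy, hzx, hxv, hyv, hzv, hvx, hvy, hvz]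
  have hvnot : ∀ c e, e ∈ G'.edges c → v ∉ e := fun c e h hvmem => hvm ((G'.valid c e h).2 v hvmem)
  have hxvr' : s(x,v) ∉ G'.edges Col.r := fun h => hvnot _ _ h (by simp)
  have hyvr' : s(y,v) ∉ G'.edges Col.r := fun h => hvnot _ _ h (by simp)
  have hzvr' : s(z,v) ∉ G'.edges Col.r := fun h => hvnot _ _ h (by simp)
  have hxyGb : s(x,y) ∉ G.edges Col.b := by rw [hEb]; simp [Finset.mem_erase]
  have hyzGb : s(y,z) ∉ G.edges Col.b := by rw [hEb]; simp [Finset.mem_erase]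
  have cV : (G.verts.card : ℤ) = G'.verts.card + 1 := by
    rw [hV, Finset.card_insert_of_notMem hvm]; push_cast; ring
  have cB2 : (G.edges Col.b).card + 2 = (G'.edges Col.b).card := by
    have h2 : s(y,z) ∈ (G'.edges Col.b).erase s(x,y) := Finset.mem_erase.mpr ⟨n1.symm, hyzb⟩
    have e1 := Finset.card_erase_add_one hxyb
    have e2 := Finset.card_erase_add_one h2
    rw [hEb]; omega
  have cR : (G.edges Col.r).card = (G'.edges Col.r).card + 4 := by
    have m2 : s(y,v) ∉ insert s(z,v) (G'.edges Col.r) := by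
      simp only [Finset.mem_insert, not_or]; exact ⟨n15, hyvr'⟩
    have m3 : s(x,v) ∉ insert s(y,v) (insert s(z,v) (G'.edges Col.r)) := by
      simp only [Finset.mem_insert, not_or]; exact ⟨n13, n14, hxvr'⟩
    have m4 : s(x,z) ∉ insert s(x,v) (insert s(y,v) (insert s(z,v) (G'.edges Col.r))) := by
      simp only [Finset.mem_insert, not_or]; exact ⟨n10, n11, n12, hxzr⟩
    rw [hEr, Finset.card_insert_of_notMem m4, Finset.card_insert_of_notMem m3,
      Finset.card_insert_of_notMem m2, Finset.card_insert_of_notMem hzvr']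
  have cE : (G.edgeCount : ℤ) = G'.edgeCount + 2 := by
    simp only [BiGraph.edgeCount]; push_cast; omega
  constructor
  · rintro ⟨⟨hGs, hGc⟩, hGl⟩
    have keyK : ∀ H : BiGraph α, H.IsSubgraph G' →
        ∃ mx my mz t1 t2 s1 s2 : ℤ,
          (0 ≤ mx ∧ mx ≤ 1) ∧ (0 ≤ my ∧ my ≤ 1) ∧ (0 ≤ mz ∧ mz ≤ 1) ∧
          (0 ≤ t1 ∧ t1 ≤ 1) ∧ (0 ≤ t2 ∧ t2 ≤ 1) ∧ (0 ≤ s1 ∧ s1 ≤ 1) ∧ (0 ≤ s2 ∧ s2 ≤ 1) ∧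
          (t1 = 1 → mx = 0 ∧ my = 0) ∧ (t2 = 1 → my = 0 ∧ mz = 0) ∧
          (s1 = 0 → my = 0 ∧ mz = 0) ∧ (s2 = 0 → mx = 0 ∧ my = 0) ∧
          (s(x,y) ∈ H.edges Col.b → t1 = 1) ∧ (s(y,z) ∈ H.edges Col.b → t2 = 1) ∧
          (H.edges Col.r = ∅ → s1 = 1 ∧ s2 = 1) ∧
          (H.edgeCount : ℤ) ≤ 2 * H.verts.card + 2*(mx+my+mz) - 4 + t1 + t2 - s1 - s2 := by
      intro H hs
      obtain ⟨hHV, hHE⟩ := hs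
      have hHb := hHE Col.b
      have hHr := hHE Col.r
      have hvnotH : v ∉ H.verts := fun h => hvm (hHV h)
      obtain ⟨mz, ez1, ez2, ez3, ez4⟩ := K2K2Aux.insert_ind H.verts z
      obtain ⟨my, ey1, ey2, ey3, ey4'⟩ := K2K2Aux.insert_ind (insert z H.verts) y
      have ey4 : y ∈ H.verts ↔ my = 0 := by
        rw [← ey4']; simp [Finset.mem_insert, hyz]
      obtain ⟨mx, ex1, ex2, ex3, ex4'⟩ := K2K2Aux.insert_ind (insert y (insert z H.verts)) x
      have ex4 : x ∈ H.verts ↔ mx = 0 := by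
        rw [← ex4']; simp [Finset.mem_insert, hxy, hxz]
      have evv : v ∉ insert x (insert y (insert z H.verts)) := by
        simp [Finset.mem_insert, hvx, hvy, hvz, hvnotH]
      obtain ⟨t1, eb1, eb2, eb3, eb4⟩ := K2K2Aux.erase_ind (H.edges Col.b) s(x,y)
      obtain ⟨t2, ec1, ec2, ec3, ec4'⟩ := K2K2Aux.erase_ind ((H.edges Col.b).erase s(x,y)) s(y,z)
      have ec4 : s(y,z) ∈ H.edges Col.b ↔ t2 = 1 := by
        rw [← ec4']; simp [Finset.mem_erase, n1.symm]
      have pzv : s(z,v) ∉ H.edges Col.r := fun h => hzvr' (hHr h)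
      have pyv : s(y,v) ∉ insert s(z,v) (H.edges Col.r) := by
        simp only [Finset.mem_insert, not_or]; exact ⟨n15, fun h => hyvr' (hHr h)⟩
      have pxv : s(x,v) ∉ insert s(y,v) (insert s(z,v) (H.edges Col.r)) := by
        simp only [Finset.mem_insert, not_or]; exact ⟨n13, n14, fun h => hxvr' (hHr h)⟩
      have pxz : s(x,z) ∉ insert s(x,v) (insert s(y,v) (insert s(z,v) (H.edges Col.r))) := by
        simp only [Finset.mem_insert, not_or]; exact ⟨n10, n11, n12, fun h => hxzr (hHr h)⟩
      obtain ⟨s1, f11, f12, f13, f14'⟩ := K2K2Aux.insert_ind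
        (insert s(x,z) (insert s(x,v) (insert s(y,v) (insert s(z,v) (H.edges Col.r))))) s(y,z)
      have f14 : s(y,z) ∈ H.edges Col.r ↔ s1 = 0 := by
        rw [← f14']; simp [Finset.mem_insert, n6, n7, n8, n9]
      obtain ⟨s2, f21, f22, f23, f24'⟩ := K2K2Aux.insert_ind
        (insert s(y,z) (insert s(x,z) (insert s(x,v) (insert s(y,v)
          (insert s(z,v) (H.edges Col.r)))))) s(x,y)
      have f24 : s(x,y) ∈ H.edges Col.r ↔ s2 = 0 := by
        rw [← f24']; simp [Finset.mem_insert, n1, n2, n3, n4, n5]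
      have hHK : ∀ t ∈ H.verts, t ∈ insert v (insert x (insert y (insert z H.verts))) :=
        fun t ht => by simp [ht]
      have hvbK : ∀ e ∈ ((H.edges Col.b).erase s(x,y)).erase s(y,z),
          ¬ e.IsDiag ∧ ∀ t ∈ e, t ∈ insert v (insert x (insert y (insert z H.verts))) := by
        intro e he
        have heH : e ∈ H.edges Col.b := Finset.mem_of_mem_erase (Finset.mem_of_mem_erase he)
        exact ⟨(H.valid Col.b e heH).1, fun t ht => hHK t ((H.valid Col.b e heH).2 t ht)⟩
      have hvrK : ∀ e ∈ insert s(x,y) (insert s(y,z) (insert s(x,z) (insert s(x,v)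
          (insert s(y,v) (insert s(z,v) (H.edges Col.r)))))),
          ¬ e.IsDiag ∧ ∀ t ∈ e, t ∈ insert v (insert x (insert y (insert z H.verts))) := by
        intro e he
        simp only [Finset.mem_insert] at he
        rcases he with rfl | rfl | rfl | rfl | rfl | rfl | he
        · exact ⟨by simp [hxy], fun t ht => by rcases Sym2.mem_iff.mp ht with rfl | rfl <;> simp⟩
        · exact ⟨by simp [hyz], fun t ht => by rcases Sym2.mem_iff.mp ht with rfl | rfl <;> simp⟩
        · exact ⟨by simp [hxz], fun t ht => by rcases Sym2.mem_iff.mp ht with rfl | rfl <;> simp⟩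
        · exact ⟨by simp [hxv], fun t ht => by rcases Sym2.mem_iff.mp ht with rfl | rfl <;> simp⟩
        · exact ⟨by simp [hyv], fun t ht => by rcases Sym2.mem_iff.mp ht with rfl | rfl <;> simp⟩
        · exact ⟨by simp [hzv], fun t ht => by rcases Sym2.mem_iff.mp ht with rfl | rfl <;> simp⟩
        · exact ⟨(H.valid Col.r e he).1, fun t ht => hHK t ((H.valid Col.r e he).2 t ht)⟩
      have hKsub : (K2K2Aux.mk2 _ _ _ hvbK hvrK).IsSubgraph G := by
        refine ⟨?_, fun c => ?_⟩
        · intro t ht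
          rw [hV]
          simp only [K2K2Aux.mk2_verts, Finset.mem_insert] at ht ⊢
          rcases ht with rfl | rfl | rfl | rfl | ht
          · exact Or.inl rfl
          · exact Or.inr hxm
          · exact Or.inr hym
          · exact Or.inr hzm
          · exact Or.inr (hHV ht)
        · cases c
          · intro e he
            simp only [K2K2Aux.mk2_edges_b] at he
            rw [hEb]
            obtain ⟨hne2, he'⟩ := Finset.mem_erase.mp he
            obtain ⟨hne1, he''⟩ := Finset.mem_erase.mp he'
            exact Finset.mem_erase.mpr ⟨hne2, Finset.mem_erase.mpr ⟨hne1, hHb he''⟩⟩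
          · intro e he
            simp only [K2K2Aux.mk2_edges_r, Finset.mem_insert] at he
            rw [hEr]
            rcases he with rfl | rfl | rfl | rfl | rfl | rfl | he
            · exact Finset.mem_insert_of_mem (Finset.mem_insert_of_mem
                (Finset.mem_insert_of_mem (Finset.mem_insert_of_mem hxyr)))
            · exact Finset.mem_insert_of_mem (Finset.mem_insert_of_mem
                (Finset.mem_insert_of_mem (Finset.mem_insert_of_mem hyzr)))
            · exact Finset.mem_insert_self _ _
            · exact Finset.mem_insert_of_mem (Finset.mem_insert_self _ _)
            · exact Finset.mem_insert_of_mem (Finset.mem_insert_of_mem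
                (Finset.mem_insert_self _ _))
            · exact Finset.mem_insert_of_mem (Finset.mem_insert_of_mem
                (Finset.mem_insert_of_mem (Finset.mem_insert_self _ _)))
            · exact Finset.mem_insert_of_mem (Finset.mem_insert_of_mem
                (Finset.mem_insert_of_mem (Finset.mem_insert_of_mem (hHr he))))
      have hKpos : 0 < (K2K2Aux.mk2 _ _ _ hvbK hvrK).edgeCount := by
        simp only [K2K2Aux.mk2_edgeCount]
        have hcp : 0 < (insert s(x,y) (insert s(y,z) (insert s(x,z) (insert s(x,v)
            (insert s(y,v) (insert s(z,v) (H.edges Col.r))))))).card :=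
          Finset.card_pos.mpr ⟨s(x,y), Finset.mem_insert_self _ _⟩
        omega
      have main := hGs _ hKsub hKpos
      simp only [K2K2Aux.mk2_edgeCount, K2K2Aux.mk2_verts] at main
      push_cast at main
      have cVK : ((insert v (insert x (insert y (insert z H.verts)))).card : ℤ)
          = ((insert x (insert y (insert z H.verts))).card : ℤ) + 1 := by
        rw [Finset.card_insert_of_notMem evv]; push_cast; ring
      have cR4 : ((insert s(x,z) (insert s(x,v) (insert s(y,v) (insert s(z,v)
          (H.edges Col.r))))).card : ℤ) = ((H.edges Col.r).card : ℤ) + 4 := by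
        rw [Finset.card_insert_of_notMem pxz, Finset.card_insert_of_notMem pxv,
          Finset.card_insert_of_notMem pyv, Finset.card_insert_of_notMem pzv]
        push_cast; ring
      have hEC : H.edgeCount = (H.edges Col.b).card + (H.edges Col.r).card := rfl
      refine ⟨mx, my, mz, t1, t2, s1, s2, ⟨ex2, ex3⟩, ⟨ey2, ey3⟩, ⟨ez2, ez3⟩,
        ⟨eb2, eb3⟩, ⟨ec2, ec3⟩, ⟨f12, f13⟩, ⟨f22, f23⟩, ?_, ?_, ?_, ?_, ?_, ?_, ?_, by omega⟩
      · intro h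
        have hm : s(x,y) ∈ H.edges Col.b := eb4.mpr h
        exact ⟨ex4.mp ((H.valid Col.b _ hm).2 x (by simp)),
          ey4.mp ((H.valid Col.b _ hm).2 y (by simp))⟩
      · intro h
        have hm : s(y,z) ∈ H.edges Col.b := ec4.mpr h
        exact ⟨ey4.mp ((H.valid Col.b _ hm).2 y (by simp)),
          ez4.mp ((H.valid Col.b _ hm).2 z (by simp))⟩
      · intro h
        have hm : s(y,z) ∈ H.edges Col.r := f14.mpr h
        exact ⟨ey4.mp ((H.valid Col.r _ hm).2 y (by simp)),
          ez4.mp ((H.valid Col.r _ hm).2 z (by simp))⟩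
      · intro h
        have hm : s(x,y) ∈ H.edges Col.r := f24.mpr h
        exact ⟨ex4.mp ((H.valid Col.r _ hm).2 x (by simp)),
          ey4.mp ((H.valid Col.r _ hm).2 y (by simp))⟩
      · exact fun h => eb4.mp h
      · exact fun h => ec4.mp h
      · intro h
        constructor
        · have hnm : s(y,z) ∉ H.edges Col.r := by simp [h]
          have h1 : s1 ≠ 0 := fun hs0 => hnm (f14.mpr hs0)
          omega
        · have hnm : s(x,y) ∉ H.edges Col.r := by simp [h]
          have h1 : s2 ≠ 0 := fun hs0 => hnm (f24.mpr hs0)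
          omega
    refine ⟨⟨?_, by omega⟩, ?_⟩
    · intro H hs hpos
      by_cases ht : s(x,y) ∈ H.edges Col.b ∨ s(y,z) ∈ H.edges Col.b
      · obtain ⟨mx,my,mz,t1,t2,s1,s2, b1,b2,b3,b4,b5,b6,b7, c1,c2,c3,c4, d1,d2, _hrd, main⟩ :=
          keyK H hs
        have hd : t1 = 1 ∨ t2 = 1 := ht.imp d1 d2
        omega
      · push_neg at ht
        obtain ⟨ht1, ht2⟩ := ht
        refine hGs H ⟨hs.1.trans (by rw [hV]; exact Finset.subset_insert _ _), fun c => ?_⟩ hpos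
        cases c
        · intro e he
          rw [hEb]
          exact Finset.mem_erase.mpr ⟨fun h => ht2 (h ▸ he),
            Finset.mem_erase.mpr ⟨fun h => ht1 (h ▸ he), hs.2 Col.b he⟩⟩
        · intro e he
          rw [hEr]
          exact Finset.mem_insert_of_mem (Finset.mem_insert_of_mem (Finset.mem_insert_of_mem
            (Finset.mem_insert_of_mem (hs.2 Col.r he))))
    · intro H hs hred hpos
      by_cases ht : s(x,y) ∈ H.edges Col.b ∨ s(y,z) ∈ H.edges Col.b
      · obtain ⟨mx,my,mz,t1,t2,s1,s2, b1,b2,b3,b4,b5,b6,b7, c1,c2,c3,c4, d1,d2, hrd, main⟩ :=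
          keyK H hs
        have hs12 := hrd hred
        have hd : t1 = 1 ∨ t2 = 1 := ht.imp d1 d2
        omega
      · push_neg at ht
        obtain ⟨ht1, ht2⟩ := ht
        refine hGl H ⟨hs.1.trans (by rw [hV]; exact Finset.subset_insert _ _), fun c => ?_⟩ hred hpos
        cases c
        · intro e he
          rw [hEb]
          exact Finset.mem_erase.mpr ⟨fun h => ht2 (h ▸ he),
            Finset.mem_erase.mpr ⟨fun h => ht1 (h ▸ he), hs.2 Col.b he⟩⟩
        · intro e he
          rw [hEr]
          exact Finset.mem_insert_of_mem (Finset.mem_insert_of_mem (Finset.mem_insert_of_mem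
            (Finset.mem_insert_of_mem (hs.2 Col.r he))))
  · rintro ⟨⟨hGs', hGc'⟩, hGl'⟩
    have keyH : ∀ H : BiGraph α, H.IsSubgraph G →
        ∃ iv kx ky kz u1 u2 u3 u4 j1 j2 : ℤ,
          (0 ≤ iv ∧ iv ≤ 1) ∧ (0 ≤ kx ∧ kx ≤ 1) ∧ (0 ≤ ky ∧ ky ≤ 1) ∧ (0 ≤ kz ∧ kz ≤ 1) ∧
          (0 ≤ u1 ∧ u1 ≤ 1) ∧ (0 ≤ u2 ∧ u2 ≤ 1) ∧ (0 ≤ u3 ∧ u3 ≤ 1) ∧ (0 ≤ u4 ∧ u4 ≤ 1) ∧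
          (0 ≤ j1 ∧ j1 ≤ 1) ∧ (0 ≤ j2 ∧ j2 ≤ 1) ∧
          (u1 = 1 → kx = 0 ∧ kz = 0) ∧ (u2 = 1 → kx = 0 ∧ iv = 1) ∧
          (u3 = 1 → ky = 0 ∧ iv = 1) ∧ (u4 = 1 → kz = 0 ∧ iv = 1) ∧
          (j1 = 0 → ky = 0 ∧ kz = 0) ∧ (j2 = 0 → kx = 0 ∧ ky = 0) ∧
          (s(x,z) ∈ H.edges Col.r → u1 = 1) ∧ (s(x,v) ∈ H.edges Col.r → u2 = 1) ∧
          (s(y,v) ∈ H.edges Col.r → u3 = 1) ∧ (s(z,v) ∈ H.edges Col.r → u4 = 1) ∧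
          (H.edgeCount : ℤ) ≤ 2 * H.verts.card - 2*iv + 2*(kx+ky+kz) - 4
            + (u1+u2+u3+u4) - j1 - j2 := by
      intro H hs
      obtain ⟨hHV, hHE⟩ := hs
      have hHb : H.edges Col.b ⊆ G'.edges Col.b := by
        intro e he
        have h := hHE Col.b he
        rw [hEb] at h
        exact Finset.mem_of_mem_erase (Finset.mem_of_mem_erase h)
      have hHr : ∀ e ∈ H.edges Col.r, e ∈ insert s(x,z) (insert s(x,v) (insert s(y,v)
          (insert s(z,v) (G'.edges Col.r)))) := by
        intro e he
        have h := hHE Col.r he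
        rwa [hEr] at h
      have hxyGbH : s(x,y) ∉ H.edges Col.b := fun h => hxyGb (hHE Col.b h)
      have hyzGbH : s(y,z) ∉ H.edges Col.b := fun h => hyzGb (hHE Col.b h)
      obtain ⟨iv, gv1, gv2, gv3, gv4⟩ := K2K2Aux.erase_ind H.verts v
      obtain ⟨kz, gz1, gz2, gz3, gz4'⟩ := K2K2Aux.insert_ind (H.verts.erase v) z
      have gz4 : z ∈ H.verts ↔ kz = 0 := by
        rw [← gz4']; simp [Finset.mem_erase, hzv]
      obtain ⟨ky, gy1, gy2, gy3, gy4'⟩ := K2K2Aux.insert_ind (insert z (H.verts.erase v)) y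
      have gy4 : y ∈ H.verts ↔ ky = 0 := by
        rw [← gy4']; simp [Finset.mem_insert, Finset.mem_erase, hyz, hyv]
      obtain ⟨kx, gx1, gx2, gx3, gx4'⟩ :=
        K2K2Aux.insert_ind (insert y (insert z (H.verts.erase v))) x
      have gx4 : x ∈ H.verts ↔ kx = 0 := by
        rw [← gx4']; simp [Finset.mem_insert, Finset.mem_erase, hxy, hxz, hxv]
      obtain ⟨u1, h11, h12, h13, h14⟩ := K2K2Aux.erase_ind (H.edges Col.r) s(x,z)
      obtain ⟨u2, h21, h22, h23, h24'⟩ :=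
        K2K2Aux.erase_ind ((H.edges Col.r).erase s(x,z)) s(x,v)
      have h24 : s(x,v) ∈ H.edges Col.r ↔ u2 = 1 := by
        rw [← h24']; simp [Finset.mem_erase, n10.symm]
      obtain ⟨u3, h31, h32, h33, h34'⟩ :=
        K2K2Aux.erase_ind (((H.edges Col.r).erase s(x,z)).erase s(x,v)) s(y,v)
      have h34 : s(y,v) ∈ H.edges Col.r ↔ u3 = 1 := by
        rw [← h34']; simp [Finset.mem_erase, n11.symm, n13.symm]
      obtain ⟨u4, h41, h42, h43, h44'⟩ :=
        K2K2Aux.erase_ind ((((H.edges Col.r).erase s(x,z)).erase s(x,v)).erase s(y,v)) s(z,v)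
      have h44 : s(z,v) ∈ H.edges Col.r ↔ u4 = 1 := by
        rw [← h44']; simp [Finset.mem_erase, n12.symm, n14.symm, n15.symm]
      obtain ⟨j1, i11, i12, i13, i14'⟩ := K2K2Aux.insert_ind
        (((((H.edges Col.r).erase s(x,z)).erase s(x,v)).erase s(y,v)).erase s(z,v)) s(y,z)
      have i14 : s(y,z) ∈ H.edges Col.r ↔ j1 = 0 := by
        rw [← i14']; simp [Finset.mem_erase, n6, n7, n8, n9]
      obtain ⟨j2, i21, i22, i23, i24'⟩ := K2K2Aux.insert_ind
        (insert s(y,z) (((((H.edges Col.r).erase s(x,z)).erase s(x,v)).erase s(y,v)).erase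
          s(z,v))) s(x,y)
      have i24 : s(x,y) ∈ H.edges Col.r ↔ j2 = 0 := by
        rw [← i24']; simp [Finset.mem_insert, Finset.mem_erase, n1, n2, n3, n4, n5]
      have hE0H : ∀ e ∈ ((((H.edges Col.r).erase s(x,z)).erase s(x,v)).erase s(y,v)).erase
          s(z,v), e ∈ H.edges Col.r := fun e he =>
        Finset.mem_of_mem_erase (Finset.mem_of_mem_erase (Finset.mem_of_mem_erase
          (Finset.mem_of_mem_erase he)))
      have hE0G' : ∀ e ∈ ((((H.edges Col.r).erase s(x,z)).erase s(x,v)).erase s(y,v)).erase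
          s(z,v), e ∈ G'.edges Col.r := by
        intro e he
        obtain ⟨ne4, he1⟩ := Finset.mem_erase.mp he
        obtain ⟨ne3, he2⟩ := Finset.mem_erase.mp he1
        obtain ⟨ne2, he3⟩ := Finset.mem_erase.mp he2
        obtain ⟨ne1, he4⟩ := Finset.mem_erase.mp he3
        have h := hHr e he4
        rcases Finset.mem_insert.mp h with h' | h'
        · exact absurd h' ne1
        rcases Finset.mem_insert.mp h' with h'' | h''
        · exact absurd h'' ne2
        rcases Finset.mem_insert.mp h'' with h3 | h3
        · exact absurd h3 ne3
        rcases Finset.mem_insert.mp h3 with h4 | h4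
        · exact absurd h4 ne4
        exact h4
      have hvb2 : ∀ e ∈ insert s(x,y) (insert s(y,z) (H.edges Col.b)), ¬ e.IsDiag ∧
          ∀ t ∈ e, t ∈ insert x (insert y (insert z (H.verts.erase v))) := by
        intro e he
        rcases Finset.mem_insert.mp he with rfl | he'
        · exact ⟨by simp [hxy], fun t ht => by rcases Sym2.mem_iff.mp ht with rfl | rfl <;> simp⟩
        rcases Finset.mem_insert.mp he' with rfl | he''
        · exact ⟨by simp [hyz], fun t ht => by rcases Sym2.mem_iff.mp ht with rfl | rfl <;> simp⟩
        refine ⟨(H.valid Col.b e he'').1, fun t ht => ?_⟩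
        have htH := (H.valid Col.b e he'').2 t ht
        have htG' := (G'.valid Col.b e (hHb he'')).2 t ht
        have htv : t ≠ v := fun hh => hvm (hh ▸ htG')
        simp [Finset.mem_insert, Finset.mem_erase, htv, htH]
      have hvr2 : ∀ e ∈ insert s(x,y) (insert s(y,z)
          (((((H.edges Col.r).erase s(x,z)).erase s(x,v)).erase s(y,v)).erase s(z,v))),
          ¬ e.IsDiag ∧ ∀ t ∈ e, t ∈ insert x (insert y (insert z (H.verts.erase v))) := by
        intro e he
        rcases Finset.mem_insert.mp he with rfl | he'
        · exact ⟨by simp [hxy], fun t ht => by rcases Sym2.mem_iff.mp ht with rfl | rfl <;> simp⟩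
        rcases Finset.mem_insert.mp he' with rfl | he''
        · exact ⟨by simp [hyz], fun t ht => by rcases Sym2.mem_iff.mp ht with rfl | rfl <;> simp⟩
        refine ⟨(H.valid Col.r e (hE0H e he'')).1, fun t ht => ?_⟩
        have htH := (H.valid Col.r e (hE0H e he'')).2 t ht
        have htG' := (G'.valid Col.r e (hE0G' e he'')).2 t ht
        have htv : t ≠ v := fun hh => hvm (hh ▸ htG')
        simp [Finset.mem_insert, Finset.mem_erase, htv, htH]
      have hKsub : (K2K2Aux.mk2 _ _ _ hvb2 hvr2).IsSubgraph G' := by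
        refine ⟨?_, fun c => ?_⟩
        · intro t ht
          simp only [K2K2Aux.mk2_verts, Finset.mem_insert, Finset.mem_erase] at ht
          rcases ht with rfl | rfl | rfl | ⟨htv, htH⟩
          · exact hxm
          · exact hym
          · exact hzm
          · have hG := hHV htH
            rw [hV] at hG
            rcases Finset.mem_insert.mp hG with h | h
            · exact absurd h htv
            · exact h
        · cases c
          · intro e he
            simp only [K2K2Aux.mk2_edges_b] at he
            rcases Finset.mem_insert.mp he with rfl | he'
            · exact hxyb
            rcases Finset.mem_insert.mp he' with rfl | he''
            · exact hyzb
            exact hHb he''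
          · intro e he
            simp only [K2K2Aux.mk2_edges_r] at he
            rcases Finset.mem_insert.mp he with rfl | he'
            · exact hxyr
            rcases Finset.mem_insert.mp he' with rfl | he''
            · exact hyzr
            exact hE0G' e he''
      have hKpos : 0 < (K2K2Aux.mk2 _ _ _ hvb2 hvr2).edgeCount := by
        simp only [K2K2Aux.mk2_edgeCount]
        have hcp : 0 < (insert s(x,y) (insert s(y,z) (H.edges Col.b))).card :=
          Finset.card_pos.mpr ⟨s(x,y), Finset.mem_insert_self _ _⟩
        omega
      have main := hGs' _ hKsub hKpos
      simp only [K2K2Aux.mk2_edgeCount, K2K2Aux.mk2_verts] at main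
      push_cast at main
      have cB2' : ((insert s(x,y) (insert s(y,z) (H.edges Col.b))).card : ℤ)
          = ((H.edges Col.b).card : ℤ) + 2 := by
        have m1 : s(x,y) ∉ insert s(y,z) (H.edges Col.b) := by
          simp only [Finset.mem_insert, not_or]; exact ⟨n1, hxyGbH⟩
        rw [Finset.card_insert_of_notMem m1, Finset.card_insert_of_notMem hyzGbH]
        push_cast; ring
      have hEC : H.edgeCount = (H.edges Col.b).card + (H.edges Col.r).card := rfl
      refine ⟨iv, kx, ky, kz, u1, u2, u3, u4, j1, j2, ⟨gv2, gv3⟩, ⟨gx2, gx3⟩, ⟨gy2, gy3⟩,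
        ⟨gz2, gz3⟩, ⟨h12, h13⟩, ⟨h22, h23⟩, ⟨h32, h33⟩, ⟨h42, h43⟩, ⟨i12, i13⟩, ⟨i22, i23⟩,
        ?_, ?_, ?_, ?_, ?_, ?_, fun h => h14.mp h, fun h => h24.mp h, fun h => h34.mp h,
        fun h => h44.mp h, by omega⟩
      · intro h
        have hm : s(x,z) ∈ H.edges Col.r := h14.mpr h
        exact ⟨gx4.mp ((H.valid Col.r _ hm).2 x (by simp)),
          gz4.mp ((H.valid Col.r _ hm).2 z (by simp))⟩
      · intro h
        have hm : s(x,v) ∈ H.edges Col.r := h24.mpr h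
        exact ⟨gx4.mp ((H.valid Col.r _ hm).2 x (by simp)),
          gv4.mp ((H.valid Col.r _ hm).2 v (by simp))⟩
      · intro h
        have hm : s(y,v) ∈ H.edges Col.r := h34.mpr h
        exact ⟨gy4.mp ((H.valid Col.r _ hm).2 y (by simp)),
          gv4.mp ((H.valid Col.r _ hm).2 v (by simp))⟩
      · intro h
        have hm : s(z,v) ∈ H.edges Col.r := h44.mpr h
        exact ⟨gz4.mp ((H.valid Col.r _ hm).2 z (by simp)),
          gv4.mp ((H.valid Col.r _ hm).2 v (by simp))⟩
      · intro h
        have hm : s(y,z) ∈ H.edges Col.r := i14.mpr h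
        exact ⟨gy4.mp ((H.valid Col.r _ hm).2 y (by simp)),
          gz4.mp ((H.valid Col.r _ hm).2 z (by simp))⟩
      · intro h
        have hm : s(x,y) ∈ H.edges Col.r := i24.mpr h
        exact ⟨gx4.mp ((H.valid Col.r _ hm).2 x (by simp)),
          gy4.mp ((H.valid Col.r _ hm).2 y (by simp))⟩
    refine ⟨⟨?_, by omega⟩, ?_⟩
    · intro H hs hpos
      by_cases hu : s(x,z) ∈ H.edges Col.r ∨ s(x,v) ∈ H.edges Col.r ∨
          s(y,v) ∈ H.edges Col.r ∨ s(z,v) ∈ H.edges Col.r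
      · obtain ⟨iv,kx,ky,kz,u1,u2,u3,u4,j1,j2, b1,b2,b3,b4,b5,b6,b7,b8,b9,b10,
          c1,c2,c3,c4,c5,c6, d1,d2,d3,d4, main⟩ := keyH H hs
        have hd : u1 = 1 ∨ u2 = 1 ∨ u3 = 1 ∨ u4 = 1 := by
          rcases hu with h | h | h | h
          exacts [Or.inl (d1 h), Or.inr (Or.inl (d2 h)),
            Or.inr (Or.inr (Or.inl (d3 h))), Or.inr (Or.inr (Or.inr (d4 h)))]
        omega
      · push_neg at hu
        obtain ⟨hu1, hu2, hu3, hu4⟩ := hu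
        have hbsub : H.edges Col.b ⊆ G'.edges Col.b := by
          intro e he
          have h := hs.2 Col.b he
          rw [hEb] at h
          exact Finset.mem_of_mem_erase (Finset.mem_of_mem_erase h)
        have hrsub : H.edges Col.r ⊆ G'.edges Col.r := by
          intro e he
          have h := hs.2 Col.r he
          rw [hEr] at h
          rcases Finset.mem_insert.mp h with h' | h'
          · exact absurd (h' ▸ he) hu1
          rcases Finset.mem_insert.mp h' with h'' | h''
          · exact absurd (h'' ▸ he) hu2
          rcases Finset.mem_insert.mp h'' with h3 | h3
          · exact absurd (h3 ▸ he) hu3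
          rcases Finset.mem_insert.mp h3 with h4 | h4
          · exact absurd (h4 ▸ he) hu4
          exact h4
        have hval : ∀ (c : Col), ∀ e ∈ H.edges c, ¬ e.IsDiag ∧ ∀ t ∈ e, t ∈ H.verts.erase v := by
          intro c e he
          refine ⟨(H.valid c e he).1, fun t ht => Finset.mem_erase.mpr ⟨?_, (H.valid c e he).2 t ht⟩⟩
          rintro rfl
          cases c
          · exact hvnot Col.b e (hbsub he) ht
          · exact hvnot Col.r e (hrsub he) ht
        have hKsub : (K2K2Aux.mk2 (H.verts.erase v) (H.edges Col.b) (H.edges Col.r)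
            (hval Col.b) (hval Col.r)).IsSubgraph G' := by
          refine ⟨fun t htm => ?_, fun c => ?_⟩
          · obtain ⟨htv, htH⟩ := Finset.mem_erase.mp htm
            have := hs.1 htH
            rw [hV] at this
            rcases Finset.mem_insert.mp this with h | h
            · exact absurd h htv
            · exact h
          · cases c
            · simpa using hbsub
            · simpa using hrsub
        have hres := hGs' _ hKsub hpos
        simp only [K2K2Aux.mk2_edgeCount, K2K2Aux.mk2_verts] at hres
        have hcard := Finset.card_le_card (Finset.erase_subset v H.verts)
        have hEC : H.edgeCount = (H.edges Col.b).card + (H.edges Col.r).card := rfl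
        omega
    · intro H hs hred hpos
      have hbsub : H.edges Col.b ⊆ G'.edges Col.b := by
        intro e he
        have h := hs.2 Col.b he
        rw [hEb] at h
        exact Finset.mem_of_mem_erase (Finset.mem_of_mem_erase h)
      have hrsub : H.edges Col.r ⊆ G'.edges Col.r := by rw [hred]; intro e he; simp at he
      have hval : ∀ (c : Col), ∀ e ∈ H.edges c, ¬ e.IsDiag ∧ ∀ t ∈ e, t ∈ H.verts.erase v := by
        intro c e he
        refine ⟨(H.valid c e he).1, fun t ht => Finset.mem_erase.mpr ⟨?_, (H.valid c e he).2 t ht⟩⟩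
        rintro rfl
        cases c
        · exact hvnot Col.b e (hbsub he) ht
        · exact hvnot Col.r e (hrsub he) ht
      have hKsub : (K2K2Aux.mk2 (H.verts.erase v) (H.edges Col.b) (H.edges Col.r)
          (hval Col.b) (hval Col.r)).IsSubgraph G' := by
        refine ⟨fun t htm => ?_, fun c => ?_⟩
        · obtain ⟨htv, htH⟩ := Finset.mem_erase.mp htm
          have := hs.1 htH
          rw [hV] at this
          rcases Finset.mem_insert.mp this with h | h
          · exact absurd h htv
          · exact h
        · cases c
          · simpa using hbsub
          · simpa using hrsub
      have hres := hGl' _ hKsub (by simpa using hred) hpos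
      simp only [K2K2Aux.mk2_edgeCount, K2K2Aux.mk2_verts] at hres
      have hcard := Finset.card_le_card (Finset.erase_subset v H.verts)
      have hEC : H.edgeCount = (H.edges Col.b).card + (H.edges Col.r).card := rfl
      omega
end
end

section
/- Consider the double-distance context (R³, d_xy, d_z). An algebraically generic double-distance framework (G,p) in (R³, d_xy, d_z) is minimally infinitesimally rigid if and only if the bar-joint framework (G_b, π_xy ∘ p) is minimally infinitesimally rigid in R² and the bar-joint framework (G_r, π_z ∘ p) is minimally infinitesimally rigid in R¹, where G_b and G_r are the spanning subgraphs of G formed by the blue and red edges respectively. -/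
open scoped BigOperators

noncomputable section

/-- Points of `m`-dimensional Euclidean space. -/
abbrev Pt (m : ℕ) : Type := EuclideanSpace ℝ (Fin m)

/-- A symmetric separation function on `m`-dimensional space. -/
def SymFun (m : ℕ) : Type := {g : Pt m → Pt m → ℝ // ∀ x y, g x y = g y x}

/-- The Euclidean distance as a symmetric separation function. -/
def euclD (m : ℕ) : SymFun m :=
  ⟨fun x y => dist x y, fun x y => dist_comm x y⟩

/-- The geodesic (great circle) distance on the unit sphere, `arccos⟨x,y⟩`. -/
def sphereGeoD : SymFun 3 :=
  ⟨fun x y => Real.arccos (∑ i : Fin 3, x i * y i), by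
    intro x y
    dsimp only
    congr 1
    exact Finset.sum_congr rfl (fun i _ => mul_comm _ _)⟩

/-- The geodesic distance on the unit cylinder `x² + y² = 1`: unrolling the cylinder,
the angular separation of the `xy`-parts is `arccos (x₀y₀ + x₁y₁)` (the minimum over
`k ∈ ℤ` of `|θ₁ - θ₂ + 2πk|`). -/
def cylGeoD : SymFun 3 :=
  ⟨fun x y => Real.sqrt ((Real.arccos (x 0 * y 0 + x 1 * y 1)) ^ 2 + (x 2 - y 2) ^ 2), by
    intro x y
    dsimp only
    have h1 : x 0 * y 0 + x 1 * y 1 = y 0 * x 0 + y 1 * x 1 := by ring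
    have h2 : (x 2 - y 2) ^ 2 = (y 2 - x 2) ^ 2 := by ring
    rw [h1, h2]⟩

/-- The `ℓ_q` distance on the plane. -/
def lqD (q : ℝ) : SymFun 2 :=
  ⟨fun x y => (|x 0 - y 0| ^ q + |x 1 - y 1| ^ q) ^ (1 / q), by
    intro x y
    dsimp only
    rw [abs_sub_comm (x 0) (y 0), abs_sub_comm (x 1) (y 1)]⟩

/-- The direction constraint `(y_v - y_w)² / (x_v - x_w)²` on the plane. -/
def dirD : SymFun 2 :=
  ⟨fun x y => (x 1 - y 1) ^ 2 / (x 0 - y 0) ^ 2, by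
    intro x y
    dsimp only
    have h1 : (x 1 - y 1) ^ 2 = (y 1 - x 1) ^ 2 := by ring
    have h2 : (x 0 - y 0) ^ 2 = (y 0 - x 0) ^ 2 := by ring
    rw [h1, h2]⟩

/-- The distance between the projections to the `xy`-plane, for points of `ℝ³`. -/
def dxyD : SymFun 3 :=
  ⟨fun x y => Real.sqrt ((x 0 - y 0) ^ 2 + (x 1 - y 1) ^ 2), by
    intro x y
    dsimp only
    have h1 : (x 0 - y 0) ^ 2 = (y 0 - x 0) ^ 2 := by ring
    have h2 : (x 1 - y 1) ^ 2 = (y 1 - x 1) ^ 2 := by ring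
    rw [h1, h2]⟩

/-- The distance between the projections to the `z`-axis, for points of `ℝ³`. -/
def dzD : SymFun 3 :=
  ⟨fun x y => |x 2 - y 2|, fun x y => abs_sub_comm (x 2) (y 2)⟩

variable {α : Type} [DecidableEq α]

/-- The constraint value of a separation function on an (unordered) edge, as a function
of the placement of all joints. -/
def edgeFun {m : ℕ} (g : SymFun m) (e : Sym2 α) (P : α → Pt m) : ℝ :=
  Sym2.lift ⟨fun v w => g.1 (P v) (P w), fun v w => g.2 (P v) (P w)⟩ e

section WithFintype

variable [Fintype α]

/-- The standard basis vector of the configuration space, in the coordinate `vj.2` of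
the joint `vj.1`. -/
def coordVec {m : ℕ} (vj : α × Fin m) : α → Pt m :=
  Pi.single vj.1 (EuclideanSpace.single vj.2 1)

/-- The `(e, vj)` entry of a rigidity matrix: the derivative of the edge constraint
function at the placement `P`, in the coordinate direction `vj`. -/
def edgeDeriv {m : ℕ} (g : SymFun m) (e : Sym2 α) (P : α → Pt m) (vj : α × Fin m) : ℝ :=
  fderiv ℝ (edgeFun g e) P (coordVec vj)

/-- The rigidity matrix of a bi-coloured framework, where blue edges impose the
constraint `gb` and red edges impose the constraint `gr`:
rows are the derivatives of the edge constraint functions. -/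
def rigidityMatrix {m : ℕ} (G : BiGraph α) (gb gr : SymFun m) (P : α → Pt m) :
    Matrix ({e // e ∈ G.edges Col.b} ⊕ {e // e ∈ G.edges Col.r}) (α × Fin m) ℝ :=
  Matrix.of fun rc vj =>
    Sum.elim (fun e : {e // e ∈ G.edges Col.b} => edgeDeriv gb e.1 P vj)
      (fun e : {e // e ∈ G.edges Col.r} => edgeDeriv gr e.1 P vj) rc

/-- The rigidity matrix of a bi-coloured framework on a surface: the first `|E|` rows
are the derivatives of the edge constraint functions and the last `|V|` rows form a
block diagonal matrix whose entries are given by the normal vector `nrm` at each joint. -/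
def surfMatrix (G : BiGraph α) (gb gr : SymFun 3) (nrm : Pt 3 → Fin 3 → ℝ)
    (P : α → Pt 3) :
    Matrix (({e // e ∈ G.edges Col.b} ⊕ {e // e ∈ G.edges Col.r}) ⊕ {v // v ∈ G.verts})
      (α × Fin 3) ℝ :=
  Matrix.of fun rc vj =>
    Sum.elim
      (Sum.elim (fun e : {e // e ∈ G.edges Col.b} => edgeDeriv gb e.1 P vj)
        (fun e : {e // e ∈ G.edges Col.r} => edgeDeriv gr e.1 P vj))
      (fun v : {v // v ∈ G.verts} => if vj.1 = v.1 then nrm (P v.1) vj.2 else 0) rc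

end WithFintype

/-- An infinitesimal flex of the bi-coloured framework `(G, P)`: a velocity vector
annihilated by the derivative of every edge constraint function. -/
def IsFlex [Fintype α] {m : ℕ} (G : BiGraph α) (gb gr : SymFun m) (P u : α → Pt m) : Prop :=
  (∀ e ∈ G.edges Col.b, fderiv ℝ (edgeFun gb e) P u = 0) ∧
  (∀ e ∈ G.edges Col.r, fderiv ℝ (edgeFun gr e) P u = 0)

/-- Infinitesimal rigidity: every infinitesimal flex of `(G, P)` is the restriction of
an infinitesimal flex of the complete bi-coloured framework `(K(V), P)`. -/
def InfRigid [Fintype α] {m : ℕ} (G : BiGraph α) (gb gr : SymFun m) (P : α → Pt m) : Prop :=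
  ∀ u : α → Pt m, IsFlex G gb gr P u →
    ∃ u' : α → Pt m, (∀ v ∈ G.verts, u' v = u v) ∧
      IsFlex (BiGraph.complete G.verts) gb gr P u'

/-- Minimal infinitesimal rigidity. -/
def MinInfRigid [Fintype α] {m : ℕ} (G : BiGraph α) (gb gr : SymFun m) (P : α → Pt m) : Prop :=
  InfRigid G gb gr P ∧ ∀ c, ∀ e ∈ G.edges c, ¬ InfRigid (G.deleteEdge c e) gb gr P

/-- Complete regularity relative to a class `Pl` of admissible placements: for every
subgraph `H` of the complete bi-coloured multigraph on the vertex set, the rank of the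
rigidity matrix of `(H, P)` is maximal over all admissible placements of `H`. -/
def CompRegular [Fintype α] {m : ℕ} (G : BiGraph α) (gb gr : SymFun m)
    (Pl : BiGraph α → (α → Pt m) → Prop) (P : α → Pt m) : Prop :=
  ∀ H : BiGraph α, H.verts ⊆ G.verts → ∀ Q : α → Pt m, Pl H Q →
    (rigidityMatrix H gb gr Q).rank ≤ (rigidityMatrix H gb gr P).rank

/-- A placement for a double-distance framework in the plane: the endpoints of each
edge are placed at distinct points. -/
def PlacementDD (G : BiGraph α) (P : α → Pt 2) : Prop :=
  ∀ c, ∀ e ∈ G.edges c, ∀ v w : α, e = s(v, w) → P v ≠ P w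

/-- A placement for a direction-length framework in the plane: endpoints of edges are
distinct, and endpoints of (blue) direction edges have distinct first coordinates. -/
def PlacementDL (G : BiGraph α) (P : α → Pt 2) : Prop :=
  PlacementDD G P ∧
  ∀ e ∈ G.edges Col.b, ∀ v w : α, e = s(v, w) → P v 0 ≠ P w 0

/-- An (uncoloured) multigraph on a finite vertex set: a simple graph given by a finite
set of unordered pairs of distinct vertices. -/
structure MGraph (α : Type) [DecidableEq α] : Type where
  verts : Finset α
  edges : Finset (Sym2 α)
  valid : ∀ e ∈ edges, ¬ e.IsDiag ∧ ∀ x ∈ e, x ∈ verts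

namespace MGraph

variable {α : Type} [DecidableEq α]

/-- The complete graph on a vertex set. -/
def complete (Vs : Finset α) : MGraph α where
  verts := Vs
  edges := Vs.sym2.filter (fun e => ¬ e.IsDiag)
  valid := by
    intro e he
    rw [Finset.mem_filter] at he
    exact ⟨he.2, fun x hx => Finset.mem_sym2_iff.mp he.1 x hx⟩

/-- Delete an edge. -/
def deleteEdge (G : MGraph α) (e₀ : Sym2 α) : MGraph α where
  verts := G.verts
  edges := G.edges.erase e₀
  valid := fun e he => G.valid e (Finset.mem_of_mem_erase he)

end MGraph

/-- The spanning monochrome subgraph of colour `c` of a bi-coloured multigraph. -/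
def BiGraph.mono {α : Type} [DecidableEq α] (G : BiGraph α) (c : Col) : MGraph α where
  verts := G.verts
  edges := G.edges c
  valid := fun e he => G.valid c e he

section MFrameworks

variable {α : Type} [DecidableEq α] [Fintype α] {m : ℕ}

/-- An infinitesimal flex of a bar-joint framework `(G, P)` in `ℝᵐ` whose edges impose
the constraint `g`. -/
def IsFlexM (G : MGraph α) (g : SymFun m) (P u : α → Pt m) : Prop :=
  ∀ e ∈ G.edges, fderiv ℝ (edgeFun g e) P u = 0

/-- Infinitesimal rigidity of a bar-joint framework: every infinitesimal flex is the
restriction of an infinitesimal flex of the complete framework. -/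
def InfRigidM (G : MGraph α) (g : SymFun m) (P : α → Pt m) : Prop :=
  ∀ u : α → Pt m, IsFlexM G g P u →
    ∃ u' : α → Pt m, (∀ v ∈ G.verts, u' v = u v) ∧
      IsFlexM (MGraph.complete G.verts) g P u'

/-- Minimal infinitesimal rigidity of a bar-joint framework. -/
def MinInfRigidM (G : MGraph α) (g : SymFun m) (P : α → Pt m) : Prop :=
  InfRigidM G g P ∧ ∀ e ∈ G.edges, ¬ InfRigidM (G.deleteEdge e) g P

end MFrameworks

/-- The projection of `ℝ³` onto the `xy`-plane. -/
def projXY (x : Pt 3) : Pt 2 := (WithLp.equiv 2 (Fin 2 → ℝ)).symm ![x 0, x 1]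

/-- The projection of `ℝ³` onto the `z`-axis. -/
def projZ (x : Pt 3) : Pt 1 := (WithLp.equiv 2 (Fin 1 → ℝ)).symm ![x 2]


namespace DDaux

def liftP (a : Pt 2) (b : Pt 1) : Pt 3 := (WithLp.equiv 2 (Fin 3 → ℝ)).symm ![a 0, a 1, b 0]

lemma projXY_liftP (a : Pt 2) (b : Pt 1) : projXY (liftP a b) = a := by
  ext i; fin_cases i <;> rfl
lemma projZ_liftP (a : Pt 2) (b : Pt 1) : projZ (liftP a b) = b := by
  ext i; fin_cases i <;> rfl
lemma liftP_proj (x : Pt 3) : liftP (projXY x) (projZ x) = x := by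
  ext i; fin_cases i <;> rfl

lemma dxy_eq (x y : Pt 3) : dxyD.1 x y = (euclD 2).1 (projXY x) (projXY y) := by
  show Real.sqrt _ = dist (projXY x) (projXY y)
  rw [EuclideanSpace.dist_eq]
  simp only [Fin.sum_univ_two, Real.dist_eq, sq_abs]
  rfl

lemma dz_eq (x y : Pt 3) : dzD.1 x y = (euclD 1).1 (projZ x) (projZ y) := by
  show |x 2 - y 2| = dist (projZ x) (projZ y)
  rw [EuclideanSpace.dist_eq]
  simp only [Fin.sum_univ_one, Real.dist_eq, sq_abs, Real.sqrt_sq_eq_abs]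
  rfl

section Maps

variable {β : Type} [Fintype β]

def LxyL : (β → Pt 3) →ₗ[ℝ] (β → Pt 2) where
  toFun Q := fun v => projXY (Q v)
  map_add' x y := by funext v; ext i; fin_cases i <;> rfl
  map_smul' c x := by funext v; ext i; fin_cases i <;> rfl
def LzL : (β → Pt 3) →ₗ[ℝ] (β → Pt 1) where
  toFun Q := fun v => projZ (Q v)
  map_add' x y := by funext v; ext i; fin_cases i <;> rfl
  map_smul' c x := by funext v; ext i; fin_cases i <;> rfl
def RxyL : (β → Pt 2) →ₗ[ℝ] (β → Pt 3) where
  toFun Q := fun v => liftP (Q v) 0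
  map_add' x y := by funext v; ext i; fin_cases i <;> simp [liftP]
  map_smul' c x := by funext v; ext i; fin_cases i <;> simp [liftP]
def RzL : (β → Pt 1) →ₗ[ℝ] (β → Pt 3) where
  toFun Q := fun v => liftP 0 (Q v)
  map_add' x y := by funext v; ext i; fin_cases i <;> simp [liftP]
  map_smul' c x := by funext v; ext i; fin_cases i <;> simp [liftP]

def Lxy : (β → Pt 3) →L[ℝ] (β → Pt 2) := LinearMap.toContinuousLinearMap LxyL
def Lz : (β → Pt 3) →L[ℝ] (β → Pt 1) := LinearMap.toContinuousLinearMap LzL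
def Rxy : (β → Pt 2) →L[ℝ] (β → Pt 3) := LinearMap.toContinuousLinearMap RxyL
def Rz : (β → Pt 1) →L[ℝ] (β → Pt 3) := LinearMap.toContinuousLinearMap RzL

lemma Lxy_apply (Q : β → Pt 3) : Lxy Q = fun v => projXY (Q v) := rfl
lemma Lz_apply (Q : β → Pt 3) : Lz Q = fun v => projZ (Q v) := rfl
lemma LxyRxy (Q : β → Pt 2) : Lxy (Rxy Q) = Q := by
  funext v; exact projXY_liftP (Q v) 0
lemma LzRz (Q : β → Pt 1) : Lz (Rz Q) = Q := by
  funext v; exact projZ_liftP 0 (Q v)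

end Maps

lemma fderiv_comp_clm_right_inverse
    {X Y : Type*} [NormedAddCommGroup X] [NormedSpace ℝ X]
    [NormedAddCommGroup Y] [NormedSpace ℝ Y]
    (L : X →L[ℝ] Y) (R : Y →L[ℝ] X) (hLR : ∀ y, L (R y) = y)
    (f : Y → ℝ) (x : X) :
    fderiv ℝ (fun z => f (L z)) x = (fderiv ℝ f (L x)).comp L := by
  by_cases hf : DifferentiableAt ℝ f (L x)
  · exact (hf.hasFDerivAt.comp x L.hasFDerivAt).fderiv
  · rw [fderiv_zero_of_not_differentiableAt hf]
    rw [fderiv_zero_of_not_differentiableAt]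
    · ext u; simp
    · intro h
      apply hf
      have hfe : f = fun y => (fun z => f (L z)) (x + R (y - L x)) := by
        funext y; simp [map_add, map_sub, hLR]
      rw [hfe]
      have hinner : DifferentiableAt ℝ (fun y : Y => x + R (y - L x)) (L x) := by fun_prop
      have h' : DifferentiableAt ℝ (fun z => f (L z)) (x + R (L x - L x)) := by
        simpa using h
      exact DifferentiableAt.comp (g := fun z => f (L z)) (f := fun y : Y => x + R (y - L x)) (L x) h' hinner

section Graphs

variable {β : Type} [DecidableEq β] [Fintype β]

lemma edgeFun_dxy (e : Sym2 β) :
    edgeFun dxyD e = fun Q : β → Pt 3 => edgeFun (euclD 2) e (Lxy Q) := by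
  funext Q
  induction e using Sym2.ind with
  | _ v w => simp only [edgeFun, Sym2.lift_mk, Lxy_apply]; exact dxy_eq (Q v) (Q w)

lemma edgeFun_dz (e : Sym2 β) :
    edgeFun dzD e = fun Q : β → Pt 3 => edgeFun (euclD 1) e (Lz Q) := by
  funext Q
  induction e using Sym2.ind with
  | _ v w => simp only [edgeFun, Sym2.lift_mk, Lz_apply]; exact dz_eq (Q v) (Q w)

lemma fderiv_edge_xy (e : Sym2 β) (P u : β → Pt 3) :
    fderiv ℝ (edgeFun dxyD e) P u
      = fderiv ℝ (edgeFun (euclD 2) e) (fun v => projXY (P v)) (fun v => projXY (u v)) := by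
  rw [edgeFun_dxy e,
    fderiv_comp_clm_right_inverse Lxy Rxy LxyRxy (edgeFun (euclD 2) e) P]
  rfl

lemma fderiv_edge_z (e : Sym2 β) (P u : β → Pt 3) :
    fderiv ℝ (edgeFun dzD e) P u
      = fderiv ℝ (edgeFun (euclD 1) e) (fun v => projZ (P v)) (fun v => projZ (u v)) := by
  rw [edgeFun_dz e,
    fderiv_comp_clm_right_inverse Lz Rz LzRz (edgeFun (euclD 1) e) P]
  rfl

lemma MGraph.ext' {G H : MGraph β} (hv : G.verts = H.verts) (he : G.edges = H.edges) :
    G = H := by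
  cases G; cases H; simp_all

lemma mono_complete (S : Finset β) (c : Col) :
    (BiGraph.complete S).mono c = MGraph.complete S :=
  MGraph.ext' rfl rfl

lemma mono_deleteEdge_same (G : BiGraph β) (c : Col) (e : Sym2 β) :
    (G.deleteEdge c e).mono c = (G.mono c).deleteEdge e :=
  MGraph.ext' rfl (by simp [BiGraph.mono, BiGraph.deleteEdge, MGraph.deleteEdge])

lemma mono_deleteEdge_other (G : BiGraph β) (c d : Col) (e : Sym2 β) (h : d ≠ c) :
    (G.deleteEdge c e).mono d = G.mono d :=
  MGraph.ext' rfl (by simp [BiGraph.mono, BiGraph.deleteEdge, h])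

lemma isFlex_iff (G : BiGraph β) (P u : β → Pt 3) :
    IsFlex G dxyD dzD P u ↔
      (IsFlexM (G.mono Col.b) (euclD 2) (fun v => projXY (P v)) (fun v => projXY (u v)) ∧
       IsFlexM (G.mono Col.r) (euclD 1) (fun v => projZ (P v)) (fun v => projZ (u v))) := by
  constructor
  · rintro ⟨hb, hr⟩
    exact ⟨fun e he => by rw [← fderiv_edge_xy]; exact hb e he,
           fun e he => by rw [← fderiv_edge_z]; exact hr e he⟩
  · rintro ⟨hb, hr⟩
    exact ⟨fun e he => by rw [fderiv_edge_xy]; exact hb e he,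
           fun e he => by rw [fderiv_edge_z]; exact hr e he⟩

lemma infRigid_iff (G : BiGraph β) (P : β → Pt 3) :
    InfRigid G dxyD dzD P ↔
      (InfRigidM (G.mono Col.b) (euclD 2) (fun v => projXY (P v)) ∧
       InfRigidM (G.mono Col.r) (euclD 1) (fun v => projZ (P v))) := by
  constructor
  · intro hG
    constructor
    · intro ub hub
      set u : β → Pt 3 := fun v => liftP (ub v) 0 with hu
      have hLx : (fun v => projXY (u v)) = ub := funext fun v => projXY_liftP (ub v) 0
      have hLz : (fun v => projZ (u v)) = (0 : β → Pt 1) := funext fun v => projZ_liftP (ub v) 0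
      have hflex : IsFlex G dxyD dzD P u := by
        rw [isFlex_iff]
        refine ⟨by rw [hLx]; exact hub, ?_⟩
        rw [hLz]
        intro e he
        exact (fderiv ℝ (edgeFun (euclD 1) e) (fun v => projZ (P v))).map_zero
      obtain ⟨u', hagree, hflex'⟩ := hG u hflex
      refine ⟨fun v => projXY (u' v), fun v hv => by
        show projXY (u' v) = ub v
        rw [hagree v hv]; exact projXY_liftP (ub v) 0, ?_⟩
      have h2 := ((isFlex_iff (BiGraph.complete G.verts) P u').mp hflex').1
      rw [mono_complete] at h2
      exact h2
    · intro ur hur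
      set u : β → Pt 3 := fun v => liftP 0 (ur v) with hu
      have hLz : (fun v => projZ (u v)) = ur := funext fun v => projZ_liftP 0 (ur v)
      have hLx : (fun v => projXY (u v)) = (0 : β → Pt 2) := funext fun v => projXY_liftP 0 (ur v)
      have hflex : IsFlex G dxyD dzD P u := by
        rw [isFlex_iff]
        refine ⟨?_, by rw [hLz]; exact hur⟩
        rw [hLx]
        intro e he
        exact (fderiv ℝ (edgeFun (euclD 2) e) (fun v => projXY (P v))).map_zero
      obtain ⟨u', hagree, hflex'⟩ := hG u hflex
      refine ⟨fun v => projZ (u' v), fun v hv => by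
        show projZ (u' v) = ur v
        rw [hagree v hv]; exact projZ_liftP 0 (ur v), ?_⟩
      have h2 := ((isFlex_iff (BiGraph.complete G.verts) P u').mp hflex').2
      rw [mono_complete] at h2
      exact h2
  · rintro ⟨hb, hr⟩ u hu
    rw [isFlex_iff] at hu
    obtain ⟨ub', hub'a, hub'f⟩ := hb _ hu.1
    obtain ⟨ur', hur'a, hur'f⟩ := hr _ hu.2
    refine ⟨fun v => liftP (ub' v) (ur' v), ?_, ?_⟩
    · intro v hv
      show liftP (ub' v) (ur' v) = u v
      rw [hub'a v hv, hur'a v hv]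
      exact liftP_proj (u v)
    · rw [isFlex_iff]
      have e1 : (fun v => projXY (liftP (ub' v) (ur' v))) = ub' :=
        funext fun v => projXY_liftP (ub' v) (ur' v)
      have e2 : (fun v => projZ (liftP (ub' v) (ur' v))) = ur' :=
        funext fun v => projZ_liftP (ub' v) (ur' v)
      rw [e1, e2, mono_complete, mono_complete]
      exact ⟨hub'f, hur'f⟩

end Graphs

end DDaux

/-- In the double-distance context `(ℝ³, d_xy, d_z)`, an
algebraically generic double-distance framework `(G, P)` is minimally infinitesimally
rigid if and only if its `xy`-projection `(G_b, π_xy ∘ P)` is minimally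
infinitesimally rigid in `ℝ²` and its `z`-axis projection `(G_r, π_z ∘ P)` is
minimally infinitesimally rigid in `ℝ¹`, where `G_b` and `G_r` are the spanning
subgraphs formed by the blue and the red edges. -/
theorem dxy_dz_rigidity_characterisation
    {α : Type} [DecidableEq α] [Fintype α] (G : BiGraph α) (P : α → Pt 3)
    (hplaceb : ∀ e ∈ G.edges Col.b, ∀ v w : α, e = s(v, w) → dxyD.1 (P v) (P w) ≠ 0)
    (hplacer : ∀ e ∈ G.edges Col.r, ∀ v w : α, e = s(v, w) → dzD.1 (P v) (P w) ≠ 0)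
    (hgen : AlgebraicIndependent ℚ
      (fun vj : {v // v ∈ G.verts} × Fin 3 => P vj.1.1 vj.2)) :
    MinInfRigid G dxyD dzD P ↔
      (MinInfRigidM (G.mono Col.b) (euclD 2) (fun v => projXY (P v)) ∧
       MinInfRigidM (G.mono Col.r) (euclD 1) (fun v => projZ (P v))) := by
  classical
  unfold MinInfRigid MinInfRigidM
  rw [DDaux.infRigid_iff]
  constructor
  · rintro ⟨⟨hbr, hrr⟩, hmin⟩
    constructor
    · refine ⟨hbr, ?_⟩
      intro e he hdel
      apply hmin Col.b e he
      rw [DDaux.infRigid_iff, DDaux.mono_deleteEdge_same, DDaux.mono_deleteEdge_other G Col.b Col.r e (by simp)]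
      exact ⟨hdel, hrr⟩
    · refine ⟨hrr, ?_⟩
      intro e he hdel
      apply hmin Col.r e he
      rw [DDaux.infRigid_iff, DDaux.mono_deleteEdge_same, DDaux.mono_deleteEdge_other G Col.r Col.b e (by simp)]
      exact ⟨hbr, hdel⟩
  · rintro ⟨⟨hbr, hbm⟩, ⟨hrr, hrm⟩⟩
    refine ⟨⟨hbr, hrr⟩, ?_⟩
    intro c e he hdel
    rw [DDaux.infRigid_iff] at hdel
    cases c with
    | b =>
      rw [DDaux.mono_deleteEdge_same, DDaux.mono_deleteEdge_other G Col.b Col.r e (by simp)] at hdel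
      exact hbm e he hdel.1
    | r =>
      rw [DDaux.mono_deleteEdge_same, DDaux.mono_deleteEdge_other G Col.r Col.b e (by simp)] at hdel
      exact hrm e he hdel.2
end
end
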